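/- arXiv:0707.1429 — 2 statements merged into one kernel-verified Lean document; each statement's English description precedes it below -/
import Mathlib

section
/- Let n ≥ 2 and suppose N, k₀ are integers with 1 ≤ k₀ and N(n) - 1 ≤ N ≤ n*(k₀+1) - k₀*(k₀-1)/2 and k₀ ≤ n. Then k₀ = n - 1 or k₀ = n. Moreover if k₀ = n - 1 then N = N(n) - 1, and if k₀ = n then N ∈ {N(n) - 1, N(n)}. -/
theorem defects_lemma_arith (n N k₀ : ℤ) (hn : 2 ≤ n) (hk1 : 1 ≤ k₀) (hkn : k₀ ≤ n)
    (hlow : n * (n + 3) / 2 - 1 ≤ N)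
    (hup : N ≤ n * (k₀ + 1) - k₀ * (k₀ - 1) / 2) :
    (k₀ = n - 1 ∨ k₀ = n) ∧
    (k₀ = n - 1 → N = n * (n + 3) / 2 - 1) ∧
    (k₀ = n → N = n * (n + 3) / 2 - 1 ∨ N = n * (n + 3) / 2) := by
  have hA : (n * (n + 3)) % 2 = 0 := by
    obtain ⟨r, hr⟩ := Int.even_mul_succ_self n
    have h : n * (n + 3) = n * (n + 1) + 2 * n := by ring
    omega
  have hB : (k₀ * (k₀ - 1)) % 2 = 0 := by
    obtain ⟨r, hr⟩ := Int.even_mul_succ_self (k₀ - 1)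
    have h : k₀ * (k₀ - 1) = (k₀ - 1) * (k₀ - 1 + 1) := by ring
    omega
  have hcase : k₀ = n - 1 ∨ k₀ = n := by
    by_contra h
    push_neg at h
    have hle : k₀ ≤ n - 2 := by omega
    have key : 2 * (n * (k₀ + 1)) - k₀ * (k₀ - 1) < n * (n + 3) - 2 := by
      nlinarith [sq_nonneg (n - k₀ - 2), sq_nonneg (n - k₀)]
    revert hlow hup hA hB key
    generalize n * (n + 3) = a
    generalize k₀ * (k₀ - 1) = b
    generalize n * (k₀ + 1) = c
    intros
    omega
  refine ⟨hcase, ?_, ?_⟩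
  · intro hk
    have h2 : 2 * (n * (k₀ + 1)) - k₀ * (k₀ - 1) = n * (n + 3) - 2 := by rw [hk]; ring
    revert hlow hup hA hB h2
    generalize n * (n + 3) = a
    generalize k₀ * (k₀ - 1) = b
    generalize n * (k₀ + 1) = c
    intros
    omega
  · intro hk
    have h2 : 2 * (n * (k₀ + 1)) - k₀ * (k₀ - 1) = n * (n + 3) := by rw [hk]; ring
    revert hlow hup hA hB h2
    generalize n * (n + 3) = a
    generalize k₀ * (k₀ - 1) = b
    generalize n * (k₀ + 1) = c
    intros
    omega
end

section
/- Let X ⊂ P^N be a smooth non-degenerate projective variety of dimension n whose defective sequence satisfies δ k ≥ δ (k-1) + k*δ 1 for all k, where dim X_{k₀} = n - (δ_{k₀} - δ_{k₀-1}) and dim X_{k₀} = N - (k₀*n + k₀ - 1 - δ_{k₀-1}) - 1 hold. Then N ≤ n*(k₀+1) - k₀*(δ 1 - 1) - δ 1 * k₀*(k₀-1)/2, with equality if and only if δ k = δ (k-1) + k*δ 1 for all 1 ≤ k ≤ k₀. -/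
theorem addit_lemma_arith (n N d : ℤ) (k₀ : ℕ) (hk : 1 ≤ k₀) (δ : ℕ → ℤ)
    (h0 : δ 0 = 0)
    (hsup : ∀ k : ℕ, 1 ≤ k → k ≤ k₀ → δ k ≥ δ (k - 1) + (k : ℤ) * δ 1)
    (hd1 : d = n - (δ k₀ - δ (k₀ - 1)))
    (hd2 : d = N - ((k₀ : ℤ) * n + (k₀ : ℤ) - 1 - δ (k₀ - 1)) - 1) :
    N ≤ n * ((k₀ : ℤ) + 1) - (k₀ : ℤ) * (δ 1 - 1) - δ 1 * (k₀ : ℤ) * ((k₀ : ℤ) - 1) / 2 ∧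
    (N = n * ((k₀ : ℤ) + 1) - (k₀ : ℤ) * (δ 1 - 1) - δ 1 * (k₀ : ℤ) * ((k₀ : ℤ) - 1) / 2 ↔
      ∀ k : ℕ, 1 ≤ k → k ≤ k₀ → δ k = δ (k - 1) + (k : ℤ) * δ 1) := by
  set K : ℤ := (k₀ : ℤ) with hK
  -- Lemma A: 2 δ m ≥ δ1 * m * (m+1) for m ≤ k₀
  have hA : ∀ m : ℕ, m ≤ k₀ → 2 * δ m ≥ δ 1 * (m : ℤ) * ((m : ℤ) + 1) := by
    intro m
    induction m with
    | zero => intro _; simp [h0]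
    | succ m ih =>
      intro hle
      have h1 := hsup (m + 1) (by omega) hle
      have h2 := ih (by omega)
      simp only [Nat.add_sub_cancel] at h1
      push_cast at h1 ⊢
      nlinarith
  -- Lemma B: equality at m forces all step equalities up to m
  have hB : ∀ m : ℕ, m ≤ k₀ → 2 * δ m = δ 1 * (m : ℤ) * ((m : ℤ) + 1) →
      ∀ k : ℕ, 1 ≤ k → k ≤ m → δ k = δ (k - 1) + (k : ℤ) * δ 1 := by
    intro m
    induction m with
    | zero => intro _ _ k hk1 hk2; omega
    | succ m ih =>
      intro hle heq k hk1 hk2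
      have h1 := hsup (m + 1) (by omega) hle
      have h2 := hA m (by omega)
      simp only [Nat.add_sub_cancel] at h1
      push_cast at heq h1
      have hstep : δ (m + 1) = δ m + ((m : ℤ) + 1) * δ 1 := by nlinarith
      have heqm : 2 * δ m = δ 1 * (m : ℤ) * ((m : ℤ) + 1) := by nlinarith
      rcases Nat.lt_or_ge k (m + 1) with h | h
      · exact ih (by omega) heqm k hk1 (by omega)
      · have hk' : k = m + 1 := by omega
        subst hk'
        simp only [Nat.add_sub_cancel]
        push_cast
        linarith [hstep]
  -- Converse: all step equalities give equality
  have hC : (∀ k : ℕ, 1 ≤ k → k ≤ k₀ → δ k = δ (k - 1) + (k : ℤ) * δ 1) →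
      ∀ m : ℕ, m ≤ k₀ → 2 * δ m = δ 1 * (m : ℤ) * ((m : ℤ) + 1) := by
    intro hs m
    induction m with
    | zero => intro _; simp [h0]
    | succ m ih =>
      intro hle
      have h1 := hs (m + 1) (by omega) hle
      have h2 := ih (by omega)
      simp only [Nat.add_sub_cancel] at h1
      push_cast at h1 ⊢
      nlinarith
  -- N in terms of δ k₀
  have hN : N = n * (K + 1) + K - δ k₀ := by
    rw [hd2] at hd1; linarith
  -- the division term
  obtain ⟨t, ht⟩ := Int.even_mul_succ_self (K - 1)
  have hT : δ 1 * K * (K - 1) = 2 * (δ 1 * t) := by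
    have : K * (K - 1) = t + t := by linear_combination ht
    linear_combination δ 1 * this
  have hq : δ 1 * K * (K - 1) / 2 = δ 1 * t := by
    rw [hT]; exact Int.mul_ediv_cancel_left _ two_ne_zero
  have hid : δ 1 * K * (K + 1) = 2 * (δ 1 * t) + 2 * (K * δ 1) := by
    linear_combination hT
  have hAk := hA k₀ le_rfl
  constructor
  · rw [hq]; linarith
  · rw [hq]
    constructor
    · intro heq
      have h2 : 2 * δ k₀ = δ 1 * K * (K + 1) := by linarith
      exact hB k₀ le_rfl h2
    · intro hs
      have h2 := hC hs k₀ le_rfl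
      linarith
end
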